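/- arXiv:2202.02007 — 3 statements merged into one kernel-verified Lean document; each statement's English description precedes it below -/
import Mathlib

section
/- Let P be a finite partially ordered set and let ω₁ and ω₂ be two linear extensions of P on the same underlying set. Then ω₂ can be obtained from ω₁ by a finite sequence of adjacent transpositions such that every intermediate total order is also a linear extension of P, and each transposition swaps two elements that are incomparable in P. -/
/-- A listing of all elements of a finite poset compatible with the order:
a linear extension presented as a list. -/
def IsLinExtList {α : Type*} [PartialOrder α] (l : List α) : Prop :=
  l.Nodup ∧ (∀ x : α, x ∈ l) ∧ l.Pairwise fun a b => ¬ b < a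

/-- One adjacent transposition: swap two consecutive entries that are
incomparable in the poset, with both the old and the new listings being linear
extensions. -/
def AdjSwapStep {α : Type*} [PartialOrder α] (l l' : List α) : Prop :=
  IsLinExtList l ∧ IsLinExtList l' ∧
    ∃ (l₁ l₂ : List α) (a b : α), ¬ a ≤ b ∧ ¬ b ≤ a ∧
      l = l₁ ++ a :: b :: l₂ ∧ l' = l₁ ++ b :: a :: l₂

open Classical in
/-- Number of inversions of `l` relative to the key `key`. -/
noncomputable def invCount {α : Type*} (key : α → ℕ) : List α → ℕ
  | [] => 0
  | a :: t => t.countP (fun b => decide (key b < key a)) + invCount key t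

open Classical

lemma invCount_eq_zero_pairwise {α : Type*} (key : α → ℕ) :
    ∀ l : List α, invCount key l = 0 → l.Pairwise (fun a b => ¬ key b < key a)
  | [], _ => List.Pairwise.nil
  | a :: t, h => by
    rw [invCount] at h
    have h1 : t.countP (fun b => decide (key b < key a)) = 0 := by omega
    have h2 : invCount key t = 0 := by omega
    refine List.pairwise_cons.2 ⟨fun b hb => ?_, invCount_eq_zero_pairwise key t h2⟩
    have := List.countP_eq_zero.1 h1 b hb
    simpa using this

lemma exists_desc {α : Type*} (key : α → ℕ) :
    ∀ l : List α, invCount key l ≠ 0 →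
      ∃ (l₁ l₂ : List α) (a b : α), l = l₁ ++ a :: b :: l₂ ∧ key b < key a
  | [], h => absurd rfl h
  | [a], h => by simp [invCount] at h
  | a :: b :: t, h => by
    by_cases hab : key b < key a
    · exact ⟨[], t, a, b, rfl, hab⟩
    · have ht : invCount key (b :: t) ≠ 0 := by
        intro h0
        apply h
        rw [invCount, h0, Nat.add_zero]
        have hpw := invCount_eq_zero_pairwise key (b :: t) h0
        have hb := (List.pairwise_cons.1 hpw).1
        rw [List.countP_eq_zero]
        intro c hc
        simp only [decide_eq_true_eq]
        rcases List.mem_cons.1 hc with rfl | hc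
        · simpa using hab
        · have := hb c hc
          omega
      obtain ⟨l₁, l₂, x, y, heq, hk⟩ := exists_desc key (b :: t) ht
      exact ⟨a :: l₁, l₂, x, y, by rw [heq]; rfl, hk⟩

lemma invCount_swap {α : Type*} (key : α → ℕ) (a b : α) (hab : key b < key a) :
    ∀ (l₁ l₂ : List α),
      invCount key (l₁ ++ b :: a :: l₂) + 1 = invCount key (l₁ ++ a :: b :: l₂)
  | [], l₂ => by
    simp only [List.nil_append, invCount, List.countP_cons]
    have h1 : ¬ key a < key b := by omega
    simp [hab, h1]
    omega
  | c :: l₁, l₂ => by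
    simp only [List.cons_append, invCount, List.append_eq]
    have hperm : (l₁ ++ b :: a :: l₂).Perm (l₁ ++ a :: b :: l₂) :=
      List.Perm.append_left l₁ (List.Perm.swap a b l₂)
    rw [hperm.countP_eq]
    have := invCount_swap key a b hab l₁ l₂
    omega

lemma swap_linExt {α : Type*} [PartialOrder α] {l₁ l₂ : List α} {a b : α}
    (h : IsLinExtList (l₁ ++ a :: b :: l₂)) (hba : ¬ a < b) :
    IsLinExtList (l₁ ++ b :: a :: l₂) := by
  obtain ⟨hnd, hmem, hpw⟩ := h
  have hperm : (l₁ ++ a :: b :: l₂).Perm (l₁ ++ b :: a :: l₂) :=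
    List.Perm.append_left l₁ (List.Perm.swap b a l₂)
  refine ⟨hperm.nodup hnd, fun x => hperm.mem_iff.1 (hmem x), ?_⟩
  rw [List.pairwise_append] at hpw ⊢
  obtain ⟨hp1, hp2, hp3⟩ := hpw
  rw [List.pairwise_cons] at hp2
  obtain ⟨ha, hp2⟩ := hp2
  rw [List.pairwise_cons] at hp2
  obtain ⟨hb, hp2⟩ := hp2
  refine ⟨hp1, ?_, ?_⟩
  · rw [List.pairwise_cons]
    refine ⟨?_, ?_⟩
    · intro c hc
      rcases List.mem_cons.1 hc with rfl | hc
      · exact fun h => hba h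
      · exact hb c hc
    · rw [List.pairwise_cons]
      exact ⟨fun c hc => ha c (List.mem_cons_of_mem _ hc), hp2⟩
  · intro x hx y hy
    apply hp3 x hx
    rcases List.mem_cons.1 hy with rfl | hy
    · exact List.mem_cons_of_mem _ (List.mem_cons_self)
    · rcases List.mem_cons.1 hy with rfl | hy
      · exact List.mem_cons_self
      · exact List.mem_cons_of_mem _ (List.mem_cons_of_mem _ hy)

lemma linExt_not_lt {α : Type*} [PartialOrder α] {m : List α} (hm : IsLinExtList m)
    {x y : α} (hxy : m.idxOf x < m.idxOf y) : ¬ y < x := by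
  have hy : y ∈ m := hm.2.1 y
  have hx : x ∈ m := hm.2.1 x
  have hylt : m.idxOf y < m.length := List.idxOf_lt_length_iff.2 hy
  have hxlt : m.idxOf x < m.length := List.idxOf_lt_length_iff.2 hx
  have := List.pairwise_iff_getElem.1 hm.2.2 (m.idxOf x) (m.idxOf y) hxlt hylt hxy
  rwa [List.getElem_idxOf, List.getElem_idxOf] at this

/-- Any two linear extensions of a finite poset are related by a finite sequence
of adjacent transpositions, each swapping two consecutive incomparable elements,
with every intermediate listing again a linear extension. -/
theorem stmt3 {α : Type*} [Fintype α] [PartialOrder α] (ω₁ ω₂ : List α)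
    (h₁ : IsLinExtList ω₁) (h₂ : IsLinExtList ω₂) :
    Relation.ReflTransGen AdjSwapStep ω₁ ω₂ := by
  classical
  set key : α → ℕ := fun a => ω₂.idxOf a with hkey
  suffices H : ∀ n (l : List α), invCount key l = n → IsLinExtList l →
      Relation.ReflTransGen AdjSwapStep l ω₂ from H _ ω₁ rfl h₁
  intro n
  induction n using Nat.strong_induction_on with
  | _ n ih =>
    intro l hn hl
    rcases Nat.eq_zero_or_pos n with rfl | hpos
    · -- l is sorted by key, hence l = ω₂
      have hpw := invCount_eq_zero_pairwise key l hn
      have hperm : l.Perm ω₂ :=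
        (List.perm_ext_iff_of_nodup hl.1 h₂.1).2 (fun a => by
          simp [hl.2.1 a, h₂.2.1 a])
      have hinj : ∀ x ∈ l, ∀ y ∈ l, key x = key y → x = y := by
        intro x _ y _ hxy
        have hx : x ∈ ω₂ := h₂.2.1 x
        have hy : y ∈ ω₂ := h₂.2.1 y
        exact (List.idxOf_inj hx).1 hxy
      have hsorted : List.Pairwise (fun a b => key a < key b) l := by
        have hne : l.Pairwise (· ≠ ·) := hl.1
        have := hne.and hpw
        refine this.imp_of_mem ?_
        intro a b ha hb ⟨hne', hle⟩
        rcases lt_or_eq_of_le (Nat.le_of_not_lt hle) with h | h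
        · exact h
        · exact absurd (hinj a ha b hb h) hne'
      have hsorted₂ : List.Pairwise (fun a b => key a < key b) ω₂ := by
        apply List.pairwise_iff_getElem.2
        intro i j hi hj hij
        simp only [hkey]
        rw [List.Nodup.idxOf_getElem h₂.1 i hi, List.Nodup.idxOf_getElem h₂.1 j hj]
        exact hij
      haveI : Std.Antisymm (fun a b => key a < key b) :=
        ⟨fun a b h h' => absurd h' (Nat.not_lt.2 (Nat.le_of_lt h))⟩
      rw [List.Perm.eq_of_pairwise' hsorted hsorted₂ hperm]
    · -- find an adjacent inversion and swap it
      obtain ⟨l₁, l₂, a, b, heq, hk⟩ := exists_desc key l (by omega)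
      -- incomparability of a and b
      have hba : ¬ b < a := by
        subst heq
        have := hl.2.2
        rw [List.pairwise_append] at this
        have h2 := (List.pairwise_cons.1 this.2.1).1 b (List.mem_cons_self)
        exact h2
      have hab : ¬ a < b := linExt_not_lt h₂ hk
      have hne : a ≠ b := by
        intro h; subst h; exact Nat.lt_irrefl _ hk
      have hnab : ¬ a ≤ b := fun h => hab (lt_of_le_of_ne h hne)
      have hnba : ¬ b ≤ a := fun h => hba (lt_of_le_of_ne h (Ne.symm hne))
      have hl' : IsLinExtList (l₁ ++ b :: a :: l₂) := by
        apply swap_linExt (heq ▸ hl) hab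
      have hstep : AdjSwapStep l (l₁ ++ b :: a :: l₂) :=
        ⟨hl, hl', l₁, l₂, a, b, hnab, hnba, heq, rfl⟩
      have hcount : invCount key (l₁ ++ b :: a :: l₂) = n - 1 := by
        have := invCount_swap key a b hk l₁ l₂
        rw [← heq] at this
        omega
      exact Relation.ReflTransGen.head hstep
        (ih (n - 1) (by omega) _ hcount hl')
end

section
/- Let G be a finite graph in which every vertex has degree 4 or degree 1, with at least one degree-1 vertex, and suppose G is connected. Then G admits a spanning subforest S such that each component of S is a tree containing exactly one degree-1 vertex of G and S spans all degree-4 vertices (i.e., a clearing forest exists). -/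
open SimpleGraph

/-- Every finite connected graph whose vertices have degree 4 (crossings) or
degree 1 (boundary vertices), with at least one degree-1 vertex, admits a
clearing forest: a subforest `S` spanning all 4-valent vertices in which each
component is a tree containing exactly one degree-1 vertex (its root). -/
theorem stmt9 {V : Type*} [Fintype V] [DecidableEq V]
    (G : SimpleGraph V) [DecidableRel G.Adj]
    (hdeg : ∀ v : V, G.degree v = 4 ∨ G.degree v = 1)
    (hconn : G.Connected) (hbdy : ∃ v : V, G.degree v = 1) :
    ∃ S : SimpleGraph V, S ≤ G ∧ S.IsAcyclic ∧
      (∃ r : V → V,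
        ∀ v : V, G.degree v = 4 → S.Reachable v (r v) ∧ G.degree (r v) = 1) ∧
      (∀ u w : V, G.degree u = 1 → G.degree w = 1 → S.Reachable u w → u = w) := by
  classical
  obtain ⟨v0, hv0⟩ := hbdy
  have hne4 : ∀ v : V, G.degree v = 4 → v ≠ v0 := by
    intro v hv hvv; rw [hvv, hv0] at hv; omega
  -- existence of a parent: a neighbor strictly closer to v0
  have hex : ∀ v : V, v ≠ v0 → ∃ x, G.Adj v x ∧ G.dist x v0 < G.dist v v0 := by
    intro v hv
    have hr : G.Reachable v v0 := hconn.preconnected v v0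
    obtain ⟨w, hw⟩ := hr.exists_walk_length_eq_dist
    obtain ⟨x, hx, t, rfl⟩ := SimpleGraph.Walk.exists_eq_cons_of_ne hv w
    refine ⟨x, hx, ?_⟩
    have h1 : G.dist x v0 ≤ t.length := SimpleGraph.dist_le t
    rw [SimpleGraph.Walk.length_cons] at hw
    omega
  have hP : ∀ v : V, ∃ x, v ≠ v0 → G.Adj v x ∧ G.dist x v0 < G.dist v v0 := by
    intro v
    by_cases h : v = v0
    · exact ⟨v0, fun hc => absurd h hc⟩
    · obtain ⟨x, hx⟩ := hex v h
      exact ⟨x, fun _ => hx⟩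
  choose p hp using hP
  -- degree-1 vertices have a unique neighbor
  have huniq : ∀ u x y : V, G.degree u = 1 → G.Adj u x → G.Adj u y → x = y := by
    intro u x y hu hx hy
    obtain ⟨a, ha⟩ := Finset.card_eq_one.mp
      ((SimpleGraph.card_neighborFinset_eq_degree G u).trans hu)
    rw [← SimpleGraph.mem_neighborFinset, ha, Finset.mem_singleton] at hx hy
    rw [hx, hy]
  -- if the parent of v has degree 1, it must be v0
  have hpv0 : ∀ v : V, v ≠ v0 → G.degree (p v) = 1 → p v = v0 := by
    intro v hv h1
    by_contra hne
    obtain ⟨hadj, hlt⟩ := hp v hv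
    have hr : G.Reachable (p v) v0 := hconn.preconnected (p v) v0
    obtain ⟨w, hw⟩ := hr.exists_walk_length_eq_dist
    obtain ⟨x, hx, t, rfl⟩ := SimpleGraph.Walk.exists_eq_cons_of_ne hne w
    have hxv : x = v := huniq (p v) x v h1 hx hadj.symm
    have h2 : G.dist x v0 ≤ t.length := SimpleGraph.dist_le t
    have h3 : G.dist v v0 = G.dist x v0 := by rw [hxv]
    rw [SimpleGraph.Walk.length_cons] at hw
    omega
  -- the clearing forest
  set S : SimpleGraph V := {
    Adj := fun a b => (G.degree a = 4 ∧ b = p a) ∨ (G.degree b = 4 ∧ a = p b)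
    symm := by
      refine ⟨fun a b h => ?_⟩
      exact h.symm
    loopless := by
      refine ⟨fun a h => ?_⟩
      rcases h with ⟨h4, hpa⟩ | ⟨h4, hpa⟩ <;>
      · have := (hp a (hne4 a h4)).2
        rw [← hpa] at this
        omega } with hSdef
  have hSadj : ∀ a b : V, S.Adj a b ↔
      ((G.degree a = 4 ∧ b = p a) ∨ (G.degree b = 4 ∧ a = p b)) := fun a b => Iff.rfl
  have hSG : S ≤ G := by
    intro a b h
    rcases (hSadj a b).mp h with ⟨h4, rfl⟩ | ⟨h4, rfl⟩
    · exact (hp a (hne4 a h4)).1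
    · exact (hp b (hne4 b h4)).1.symm
  have hdlt : ∀ a : V, G.degree a = 4 → G.dist (p a) v0 < G.dist a v0 :=
    fun a h => (hp a (hne4 a h)).2
  -- acyclicity
  have hacy : S.IsAcyclic := by
    intro v c hc
    obtain ⟨m, hmF, hmaxF⟩ := Finset.exists_max_image c.support.toFinset
      (fun x => G.dist x v0) ⟨v, List.mem_toFinset.mpr c.start_mem_support⟩
    have hm : m ∈ c.support := List.mem_toFinset.mp hmF
    have hmax : ∀ x ∈ c.support, G.dist x v0 ≤ G.dist m v0 :=
      fun x hx => hmaxF x (List.mem_toFinset.mpr hx)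
    have hrot := SimpleGraph.Walk.support_rotate c m hm
    have hc' : (c.rotate m hm).IsCycle := hc.rotate hm
    have htail : ∀ x, x ∈ (c.rotate m hm).support.tail → x ∈ c.support := by
      intro x hx
      exact List.mem_of_mem_tail (hrot.mem_iff.mp hx)
    obtain ⟨b, hab, q, hq⟩ := SimpleGraph.Walk.not_nil_iff.mp hc'.not_nil
    have hbm : b ∈ c.support := by
      apply htail
      rw [hq, SimpleGraph.Walk.support_cons]
      exact q.start_mem_support
    obtain ⟨y, hmy, q2, hq2⟩ := SimpleGraph.Walk.not_nil_iff.mp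
      (show ¬ q.reverse.Nil by
        rw [SimpleGraph.Walk.not_nil_iff_lt_length, SimpleGraph.Walk.length_reverse]
        have h3 := hc'.three_le_length
        rw [hq, SimpleGraph.Walk.length_cons] at h3
        omega)
    have hym : y ∈ c.support := by
      apply htail
      rw [hq, SimpleGraph.Walk.support_cons]
      have : y ∈ q.reverse.support := by
        rw [hq2, SimpleGraph.Walk.support_cons]
        exact List.mem_cons_of_mem _ q2.start_mem_support
      rwa [SimpleGraph.Walk.support_reverse, List.mem_reverse] at this
    have hb : b = p m := by
      rcases (hSadj m b).mp hab with ⟨h4, rfl⟩ | ⟨h4, hmp⟩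
      · rfl
      · have h1 := hdlt b h4
        rw [← hmp] at h1
        have h2 := hmax b hbm
        omega
    have hy : y = p m := by
      rcases (hSadj m y).mp hmy with ⟨h4, rfl⟩ | ⟨h4, hmp⟩
      · rfl
      · have h1 := hdlt y h4
        rw [← hmp] at h1
        have h2 := hmax y hym
        omega
    -- first edge of the rotated cycle appears again among the remaining edges
    have hmem : s(m, y) ∈ q.edges := by
      have : s(m, y) ∈ q.reverse.edges := by
        rw [hq2, SimpleGraph.Walk.edges_cons]
        exact List.mem_cons_self
      rwa [SimpleGraph.Walk.edges_reverse, List.mem_reverse] at this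
    have hnodup : ((c.rotate m hm).edges).Nodup := hc'.isTrail.edges_nodup
    rw [hq, SimpleGraph.Walk.edges_cons, List.nodup_cons] at hnodup
    exact hnodup.1 (by rw [show s(m, b) = s(m, y) from by rw [hb, hy]]; exact hmem)
  -- every degree-4 vertex reaches v0 in S
  have hreach : ∀ n : ℕ, ∀ v : V, G.degree v = 4 → G.dist v v0 ≤ n → S.Reachable v v0 := by
    intro n
    induction n with
    | zero =>
      intro v hv h0
      exfalso
      have : v = v0 := (hconn.dist_eq_zero_iff).mp (Nat.le_zero.mp h0)
      exact hne4 v hv this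
    | succ n ih =>
      intro v hv hle
      have hadj : S.Adj v (p v) := (hSadj v (p v)).mpr (Or.inl ⟨hv, rfl⟩)
      rcases hdeg (p v) with h4 | h1
      · have hlt := hdlt v hv
        exact (hadj.reachable).trans (ih (p v) h4 (by omega))
      · have : p v = v0 := hpv0 v (hne4 v hv) h1
        rw [← this]
        exact hadj.reachable
  -- degree-1 vertices other than v0 are isolated in S
  have hiso : ∀ u : V, G.degree u = 1 → u ≠ v0 → ∀ x, ¬ S.Adj u x := by
    intro u h1 hu x hadj
    rcases (hSadj u x).mp hadj with ⟨h4, _⟩ | ⟨h4, hux⟩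
    · rw [h1] at h4; omega
    · rw [hux] at h1 hu
      exact hu (hpv0 x (hne4 x h4) h1)
  refine ⟨S, hSG, hacy, ⟨fun _ => v0, ?_⟩, ?_⟩
  · intro v hv
    exact ⟨hreach (G.dist v v0) v hv le_rfl, hv0⟩
  · intro u w h1 h2 hr
    by_cases hu : u = v0
    · by_cases hw : w = v0
      · rw [hu, hw]
      · obtain ⟨q⟩ := hr.symm
        cases q with
        | nil => rfl
        | cons h _ => exact absurd h (hiso w h2 hw _)
    · obtain ⟨q⟩ := hr
      cases q with
      | nil => rfl
      | cons h _ => exact absurd h (hiso u h1 hu _)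
end

section
/- Let G be a finite graph whose vertices all have degree 4 except for univalent boundary vertices. If v is a 4-valent vertex with at least two boundary-adjacent edges e and d, and S is a clearing forest containing e as the outgoing edge of v, then (S \ {e}) ∪ {d} is also a clearing forest (each component remains a tree with exactly one univalent root, spanning all 4-valent vertices). -/
open SimpleGraph

/-- `S` is a clearing forest for `G`: a subforest of `G` such that each
component is a tree containing exactly one univalent vertex of `G` (its root);
in particular every vertex (so in particular every 4-valent vertex, which `S`
must span) reaches a unique univalent vertex in `S`. -/
def IsClearingForest {V : Type*} [Fintype V] (G : SimpleGraph V)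
    [DecidableRel G.Adj] (S : SimpleGraph V) : Prop :=
  S ≤ G ∧ S.IsAcyclic ∧
    ∀ v : V, ∃! u : V, S.Reachable v u ∧ G.degree u = 1

lemma reach_of_isolated {V : Type*} {H : SimpleGraph V} {a w : V}
    (ha : ∀ z, ¬ H.Adj a z) (h : H.Reachable a w) : a = w := by
  obtain ⟨p⟩ := h
  cases p with
  | nil => rfl
  | cons h' _ => exact absurd h' (ha _)

lemma reach_step {V : Type*} {H : SimpleGraph V} {a b w : V}
    (ha : ∀ c, H.Adj a c → c = b) (hne : a ≠ w) (h : H.Reachable a w) :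
    H.Reachable b w := by
  obtain ⟨p⟩ := h
  cases p with
  | nil => exact absurd rfl hne
  | cons h' q => exact (ha _ h') ▸ ⟨q⟩

lemma reach_avoid_aux {V : Type*} {H : SimpleGraph V} {a b : V}
    (ha : ∀ c, H.Adj a c → c = b) :
    ∀ (n : ℕ) {u w : V} (p : H.Walk u w), p.length = n → u ≠ a → w ≠ a →
      (H.deleteEdges {s(b, a)}).Reachable u w := by
  intro n
  induction n using Nat.strong_induction_on with
  | _ n ih =>
    intro u w p hl hu hw
    cases p with
    | nil => exact Reachable.refl _
    | @cons _ c _ h q =>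
      by_cases hc : c = a
      · have hub : u = b := ha u (hc ▸ h).symm
        cases q with
        | nil => exact absurd hc hw
        | @cons _ z _ h2 q2 =>
          have hz : z = b := ha z (hc ▸ h2)
          subst hz hub
          exact ih q2.length (by simp at hl; omega) q2 rfl (hc ▸ h2).ne' hw
      · have hadj : (H.deleteEdges {s(b, a)}).Adj u c := by
          rw [deleteEdges_adj]
          refine ⟨h, ?_⟩
          simp only [Set.mem_singleton_iff, Sym2.eq, Sym2.rel_iff', Prod.mk.injEq,
            Prod.swap_prod_mk]
          rintro (⟨rfl, rfl⟩ | ⟨rfl, rfl⟩)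
          · exact hc rfl
          · exact hu rfl
        exact hadj.reachable.trans (ih q.length (by simp at hl; omega) q rfl hc hw)

lemma reach_avoid {V : Type*} {H : SimpleGraph V} {a b u w : V}
    (ha : ∀ c, H.Adj a c → c = b) (hu : u ≠ a) (hw : w ≠ a)
    (h : H.Reachable u w) : (H.deleteEdges {s(b, a)}).Reachable u w := by
  obtain ⟨p⟩ := h
  exact reach_avoid_aux ha p.length p rfl hu hw

lemma deg_one_only {V : Type*} [Fintype V] [DecidableEq V] {G : SimpleGraph V}
    [DecidableRel G.Adj] {a b : V} (ha : G.degree a = 1) (hab : G.Adj a b) :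
    ∀ z, G.Adj a z → z = b := by
  intro z hz
  have h1 : z ∈ G.neighborFinset a := by simpa using hz
  have h2 : b ∈ G.neighborFinset a := by simpa using hab
  exact Finset.card_le_one.mp (le_of_eq ha) _ h1 _ h2

/-- Let `G` be a finite graph whose vertices have degree 4 or degree 1
(boundary vertices).  If `v` is a 4-valent vertex with two distinct
boundary-adjacent edges `e = vx` and `d = vy` (`x`, `y` univalent), and `S` is
a clearing forest containing `e` (necessarily as the outgoing edge of `v`),
then replacing `e` by `d` in `S` again yields a clearing forest. -/
theorem stmt17 {V : Type*} [Fintype V] [DecidableEq V]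
    (G : SimpleGraph V) [DecidableRel G.Adj]
    (hdeg : ∀ v : V, G.degree v = 4 ∨ G.degree v = 1)
    (S : SimpleGraph V) (hS : IsClearingForest G S)
    (v x y : V) (hv : G.degree v = 4)
    (hx : G.degree x = 1) (hy : G.degree y = 1) (hxy : x ≠ y)
    (hvx : G.Adj v x) (hvy : G.Adj v y) (hSvx : S.Adj v x) :
    IsClearingForest G
      ((S.deleteEdges {s(v, x)}) ⊔ SimpleGraph.fromEdgeSet {s(v, y)}) := by
  obtain ⟨hle, hacy, hroot⟩ := hS
  have hxv : x ≠ v := fun h => by rw [h, hv] at hx; omega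
  have hyv : y ≠ v := fun h => by rw [h, hv] at hy; omega
  have hGxonly : ∀ z, G.Adj x z → z = v := deg_one_only hx hvx.symm
  have hGyonly : ∀ z, G.Adj y z → z = v := deg_one_only hy hvy.symm
  have hSxonly : ∀ z, S.Adj x z → z = v := fun z hz => hGxonly z (hle hz)
  have hSvy : ¬ S.Adj v y := by
    intro h
    obtain ⟨u, _, hu⟩ := hroot v
    exact hxy ((hu x ⟨hSvx.reachable, hx⟩).trans (hu y ⟨h.reachable, hy⟩).symm)
  have hSyiso : ∀ z, ¬ S.Adj y z := by
    intro z hz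
    have hzv := hGyonly z (hle hz)
    exact hSvy ((hzv ▸ hz : S.Adj y v).symm)
  have hTyiso : ∀ z, ¬ (S.deleteEdges {s(v, x)}).Adj y z := by
    intro z hz
    exact hSyiso z (hz.1)
  have hS'vy : ((S.deleteEdges {s(v, x)}) ⊔ fromEdgeSet {s(v, y)}).Adj v y := by
    right
    simp [hyv.symm]
  have hS'xiso : ∀ z, ¬ ((S.deleteEdges {s(v, x)}) ⊔ fromEdgeSet {s(v, y)}).Adj x z := by
    rintro z (hz | hz)
    · have hzv := hSxonly z hz.1
      refine hz.2 ?_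
      rw [fromEdgeSet_adj, hzv]
      exact ⟨by simp [Sym2.eq_swap], hxv⟩
    · rw [fromEdgeSet_adj] at hz
      have := hz.1
      simp only [Set.mem_singleton_iff, Sym2.eq, Sym2.rel_iff', Prod.mk.injEq,
        Prod.swap_prod_mk] at this
      rcases this with ⟨h1, h2⟩ | ⟨h1, h2⟩
      · exact hxv h1
      · exact hxy h1
  have hS'yonly : ∀ z, ((S.deleteEdges {s(v, x)}) ⊔ fromEdgeSet {s(v, y)}).Adj y z → z = v := by
    rintro z (hz | hz)
    · exact absurd hz (hTyiso z)
    · rw [fromEdgeSet_adj] at hz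
      have := hz.1
      simp only [Set.mem_singleton_iff, Sym2.eq, Sym2.rel_iff', Prod.mk.injEq,
        Prod.swap_prod_mk] at this
      rcases this with ⟨h1, h2⟩ | ⟨h1, h2⟩
      · exact absurd h1 hyv
      · exact h2
  -- transfer lemmas
  have hST : ∀ {a b : V}, a ≠ x → b ≠ x → S.Reachable a b →
      (S.deleteEdges {s(v, x)}).Reachable a b :=
    fun ha hb h => reach_avoid hSxonly ha hb h
  have hS'T : ∀ {a b : V}, a ≠ y → b ≠ y →
      ((S.deleteEdges {s(v, x)}) ⊔ fromEdgeSet {s(v, y)}).Reachable a b →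
      (S.deleteEdges {s(v, x)}).Reachable a b := by
    intro a b ha hb h
    have h2 := reach_avoid hS'yonly ha hb h
    refine h2.mono ?_
    rintro c d ⟨(hcd | hcd), hne⟩
    · exact hcd
    · exact absurd hcd hne
  refine ⟨?_, ?_, ?_⟩
  · -- S' ≤ G
    refine sup_le (le_trans (deleteEdges_le _) hle) ?_
    intro a b hab
    rw [fromEdgeSet_adj] at hab
    obtain ⟨h1, h2⟩ := hab
    simp only [Set.mem_singleton_iff, Sym2.eq, Sym2.rel_iff', Prod.mk.injEq,
      Prod.swap_prod_mk] at h1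
    rcases h1 with ⟨rfl, rfl⟩ | ⟨rfl, rfl⟩
    · exact hvy
    · exact hvy.symm
  · -- acyclic
    rw [isAcyclic_iff_forall_adj_isBridge]
    intro a b hab
    rw [isBridge_iff]
    intro hreach
    rcases hab with hab | hab
    · -- edge of T, hence of S
      have hSab : S.Adj a b := hab.1
      have hbr := isAcyclic_iff_forall_adj_isBridge.mp hacy hSab
      rw [isBridge_iff] at hbr
      apply hbr
      have hay : a ≠ y := fun h => hSyiso b (h ▸ hSab)
      have hby : b ≠ y := fun h => hSyiso a (h ▸ hSab.symm)
      have honly : ∀ c, (((S.deleteEdges {s(v, x)}) ⊔ fromEdgeSet {s(v, y)}) \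
          fromEdgeSet {s(a, b)}).Adj y c → c = v := fun c hc => hS'yonly c hc.1
      have h3 := reach_avoid honly hay hby hreach
      refine h3.mono ?_
      rintro c d ⟨⟨(hcd | hcd), hcd2⟩, hcd3⟩
      · exact ⟨hcd.1, hcd2⟩
      · exact absurd hcd hcd3
    · -- the new edge s(v,y)
      rw [fromEdgeSet_adj] at hab
      have hSreach : S.Reachable a b := by
        refine hreach.mono ?_
        rintro c d ⟨(hcd | hcd), hne⟩
        · exact hcd.1
        · exfalso
          apply hne
          rw [fromEdgeSet_adj] at hcd ⊢
          have h1 : s(c, d) = s(v, y) := Set.mem_singleton_iff.mp hcd.1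
          have h2 : s(a, b) = s(v, y) := Set.mem_singleton_iff.mp hab.1
          exact ⟨by rw [Set.mem_singleton_iff, h1, h2], hcd.2⟩
      have h1 := hab.1
      simp only [Set.mem_singleton_iff, Sym2.eq, Sym2.rel_iff', Prod.mk.injEq,
        Prod.swap_prod_mk] at h1
      rcases h1 with ⟨rfl, rfl⟩ | ⟨rfl, rfl⟩
      · exact hyv (reach_of_isolated hSyiso hSreach.symm)
      · exact hyv (reach_of_isolated hSyiso hSreach)
  · -- unique root
    intro w
    obtain ⟨u₀, ⟨hru, hdu⟩, huniq⟩ := hroot w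
    by_cases hwx : w = x
    · refine ⟨x, ⟨by rw [hwx], hx⟩, ?_⟩
      rintro z ⟨hz, _⟩
      rw [hwx] at hz
      exact (reach_of_isolated hS'xiso hz).symm
    · by_cases hwr : S.Reachable w x
      · refine ⟨y, ⟨?_, hy⟩, ?_⟩
        · have h1 : S.Reachable w v := hwr.trans hSvx.symm.reachable
          have h2 := hST hwx hxv.symm h1
          exact (h2.mono le_sup_left).trans hS'vy.reachable
        · rintro z ⟨hz, hdz⟩
          by_contra hzy
          have hwy : w ≠ y := by
            rintro rfl
            exact hxy (reach_of_isolated hSyiso hwr).symm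
          have hz' := (hS'T hwy hzy hz).mono (deleteEdges_le _)
          have h1 : z = u₀ := huniq z ⟨hz', hdz⟩
          have h2 : x = u₀ := huniq x ⟨hwr, hx⟩
          have hzx : z = x := h1.trans h2.symm
          subst hzx
          exact hwx (reach_of_isolated hS'xiso hz.symm).symm
      · refine ⟨u₀, ⟨?_, hdu⟩, ?_⟩
        · have hux : u₀ ≠ x := fun h => hwr (h ▸ hru)
          exact (hST hwx hux hru).mono le_sup_left
        · rintro z ⟨hz, hdz⟩
          by_cases hwy : w = y
          · have hu0 : u₀ = y := by
              rw [hwy] at hru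
              exact (reach_of_isolated hSyiso hru).symm
            rw [hwy] at hz
            by_cases hzy : z = y
            · exact hzy.trans hu0.symm
            · have h1 := reach_step hS'yonly (fun h => hzy h.symm) hz
              have h2 := (hS'T (Ne.symm hyv) hzy h1).mono (deleteEdges_le _)
              obtain ⟨u1, _, hu1⟩ := hroot v
              have hzx : z = x := (hu1 z ⟨h2, hdz⟩).trans (hu1 x ⟨hSvx.reachable, hx⟩).symm
              subst hzx
              exact absurd (reach_of_isolated hS'xiso hz.symm) hxy
          · by_cases hzy : z = y
            · subst hzy
              have h1 := reach_step hS'yonly (fun h => hwy h.symm) hz.symm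
              have h2 := ((hS'T (Ne.symm hyv) hwy h1).mono (deleteEdges_le _)).symm
              exact absurd (h2.trans hSvx.reachable) hwr
            · have h2 := (hS'T hwy hzy hz).mono (deleteEdges_le _)
              exact huniq z ⟨h2, hdz⟩
end
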